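/- Every computable function δ : ℝ → ℝ in the sense of Lacombe (via nested oracles of rational intervals) is continuous. -/
import Mathlib


/-- φ is a nested oracle for the real number x: a sequence of nested open rational
intervals whose intersection is {x}. -/
def NestedOracle (φ : ℕ → ℚ × ℚ) (x : ℝ) : Prop :=
  (∀ m, Set.Ioo ((φ (m + 1)).1 : ℝ) ((φ (m + 1)).2 : ℝ) ⊆
    Set.Ioo ((φ m).1 : ℝ) ((φ m).2 : ℝ)) ∧
  (⋂ m, Set.Ioo ((φ m).1 : ℝ) ((φ m).2 : ℝ)) = {x}

lemma nestedOracle_mem {φ : ℕ → ℚ × ℚ} {x : ℝ} (h : NestedOracle φ x) (m : ℕ) :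
    x ∈ Set.Ioo ((φ m).1 : ℝ) ((φ m).2 : ℝ) := by
  have hx : x ∈ ⋂ m, Set.Ioo ((φ m).1 : ℝ) ((φ m).2 : ℝ) := by
    rw [h.2]; exact Set.mem_singleton x
  exact Set.mem_iInter.mp hx m

lemma nestedOracle_anti {φ : ℕ → ℚ × ℚ} {x : ℝ} (h : NestedOracle φ x) :
    Antitone (fun m => Set.Ioo ((φ m).1 : ℝ) ((φ m).2 : ℝ)) :=
  antitone_nat_of_succ_le h.1

lemma oracle_extend (x : ℝ) (p q : ℚ) (hp : (p : ℝ) < x) (hq : x < (q : ℝ)) :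
    ∃ φ : ℕ → ℚ × ℚ, NestedOracle φ x ∧ φ 0 = (p, q) := by
  have hc : ∀ j : ℕ, ∃ c : ℚ, (p : ℝ) ⊔ (x - 1 / (j + 1)) < (c : ℝ) ∧ (c : ℝ) < x := by
    intro j
    refine exists_rat_btwn ?_
    refine max_lt hp ?_
    have : (0 : ℝ) < 1 / (j + 1) := by positivity
    linarith
  choose c hc1 hc2 using hc
  have hd : ∀ j : ℕ, ∃ d : ℚ, x < (d : ℝ) ∧ (d : ℝ) < (q : ℝ) ⊓ (x + 1 / (j + 1)) := by
    intro j
    refine exists_rat_btwn ?_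
    refine lt_min hq ?_
    have : (0 : ℝ) < 1 / (j + 1) := by positivity
    linarith
  choose d hd1 hd2 using hd
  have hne : ∀ j : ℕ, (Finset.range (j + 1)).Nonempty :=
    fun j => ⟨0, Finset.mem_range.2 (Nat.succ_pos j)⟩
  set C : ℕ → ℚ := fun j => (Finset.range (j + 1)).sup' (hne j) c with hC
  set D : ℕ → ℚ := fun j => (Finset.range (j + 1)).inf' (hne j) d with hD
  have hCx : ∀ j, (p : ℝ) < (C j : ℝ) ∧ (C j : ℝ) < x := by
    intro j
    obtain ⟨i, hi, hieq⟩ := Finset.exists_mem_eq_sup' (hne j) c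
    rw [hC]; simp only
    rw [hieq]
    exact ⟨(le_max_left _ _).trans_lt (hc1 i), hc2 i⟩
  have hDx : ∀ j, x < (D j : ℝ) ∧ (D j : ℝ) < (q : ℝ) := by
    intro j
    obtain ⟨i, hi, hieq⟩ := Finset.exists_mem_eq_inf' (hne j) d
    rw [hD]; simp only
    rw [hieq]
    exact ⟨hd1 i, (hd2 i).trans_le (min_le_left _ _)⟩
  have hCc : ∀ j, c j ≤ C j := fun j =>
    Finset.le_sup' c (Finset.mem_range.2 (Nat.lt_succ_self j))
  have hDd : ∀ j, D j ≤ d j := fun j =>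
    Finset.inf'_le d (Finset.mem_range.2 (Nat.lt_succ_self j))
  have hCmono : Monotone C := by
    intro j k hjk
    refine Finset.sup'_le _ _ fun i hi => Finset.le_sup' c ?_
    exact Finset.mem_range.2 ((Finset.mem_range.1 hi).trans_le (Nat.succ_le_succ hjk))
  have hDanti : Antitone D := by
    intro j k hjk
    refine Finset.le_inf' _ _ fun i hi => Finset.inf'_le d ?_
    exact Finset.mem_range.2 ((Finset.mem_range.1 hi).trans_le (Nat.succ_le_succ hjk))
  refine ⟨fun k => Nat.casesOn k (p, q) (fun j => (C j, D j)), ⟨?_, ?_⟩, rfl⟩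
  · intro m
    cases m with
    | zero =>
      exact Set.Ioo_subset_Ioo (le_of_lt (hCx 0).1) (le_of_lt (hDx 0).2)
    | succ j =>
      exact Set.Ioo_subset_Ioo (by exact_mod_cast hCmono (Nat.le_succ j))
        (by exact_mod_cast hDanti (Nat.le_succ j))
  · ext z
    simp only [Set.mem_iInter, Set.mem_singleton_iff]
    constructor
    · intro hz
      have h1 : ∀ j : ℕ, x - 1 / (j + 1) < z := by
        intro j
        have hz' := hz (j + 1)
        have h2 : (C j : ℝ) < z := hz'.1
        have h3 : (c j : ℝ) ≤ (C j : ℝ) := by exact_mod_cast hCc j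
        have h4 : x - 1 / (j + 1) < (c j : ℝ) := (le_max_right _ _).trans_lt (hc1 j)
        linarith
      have h2 : ∀ j : ℕ, z < x + 1 / (j + 1) := by
        intro j
        have hz' := hz (j + 1)
        have h2 : z < (D j : ℝ) := hz'.2
        have h3 : (D j : ℝ) ≤ (d j : ℝ) := by exact_mod_cast hDd j
        have h4 : (d j : ℝ) < x + 1 / (j + 1) := (hd2 j).trans_le (min_le_right _ _)
        linarith
      refine le_antisymm ?_ ?_
      · by_contra hlt
        push_neg at hlt
        obtain ⟨n, hn⟩ := exists_nat_one_div_lt (sub_pos.2 hlt)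
        have := h2 n
        have : (n : ℝ) + 1 = ((n : ℕ) : ℝ) + 1 := by norm_num
        linarith [h2 n, hn]
      · by_contra hlt
        push_neg at hlt
        obtain ⟨n, hn⟩ := exists_nat_one_div_lt (sub_pos.2 hlt)
        linarith [h1 n, hn]
    · rintro rfl j
      cases j with
      | zero => exact ⟨hp, hq⟩
      | succ i => exact ⟨(hCx i).2, (hDx i).1⟩

lemma oracle_prefix {φ : ℕ → ℚ × ℚ} {x : ℝ} (hφ : NestedOracle φ x) (m : ℕ)
    (y : ℝ) (hy : y ∈ Set.Ioo ((φ m).1 : ℝ) ((φ m).2 : ℝ)) :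
    ∃ ψ : ℕ → ℚ × ℚ, NestedOracle ψ y ∧ ψ m = φ m := by
  obtain ⟨θ, hθ, hθ0⟩ := oracle_extend y (φ m).1 (φ m).2 hy.1 hy.2
  refine ⟨fun k => if k ≤ m then φ k else θ (k - m), ⟨?_, ?_⟩, by simp⟩
  · intro k
    beta_reduce
    rcases lt_trichotomy k m with hk | hk | hk
    · rw [if_pos hk.le, if_pos (Nat.succ_le_of_lt hk)]
      exact hφ.1 k
    · subst hk
      rw [if_pos le_rfl, if_neg (by omega)]
      have heq : k + 1 - k = 1 := by omega
      rw [heq]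
      simpa [hθ0] using hθ.1 0
    · rw [if_neg (by omega), if_neg (by omega)]
      have : k + 1 - m = (k - m) + 1 := by omega
      rw [this]
      exact hθ.1 (k - m)
  · ext z
    simp only [Set.mem_iInter, Set.mem_singleton_iff]
    constructor
    · intro hz
      have hθz : ∀ j, z ∈ Set.Ioo ((θ j).1 : ℝ) ((θ j).2 : ℝ) := by
        intro j
        cases j with
        | zero =>
          have := hz m
          beta_reduce at this
          rw [if_pos le_rfl] at this
          simpa [hθ0] using this
        | succ i =>
          have := hz (m + (i + 1))
          beta_reduce at this
          rw [if_neg (by omega)] at this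
          have heq : m + (i + 1) - m = i + 1 := by omega
          rwa [heq] at this
      have : z ∈ ⋂ j, Set.Ioo ((θ j).1 : ℝ) ((θ j).2 : ℝ) := Set.mem_iInter.2 hθz
      rw [hθ.2] at this
      exact this
    · rintro rfl k
      by_cases hk : k ≤ m
      · rw [if_pos hk]
        exact nestedOracle_anti hφ hk hy
      · rw [if_neg hk]
        exact nestedOracle_mem hθ (k - m)

lemma oracle_shrink {φ : ℕ → ℚ × ℚ} {x : ℝ} (hφ : NestedOracle φ x) {ε : ℝ} (hε : 0 < ε) :
    ∃ m, Set.Ioo ((φ m).1 : ℝ) ((φ m).2 : ℝ) ⊆ Set.Ioo (x - ε) (x + ε) := by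
  set a : ℕ → ℝ := fun m => ((φ m).1 : ℝ) with ha
  set b : ℕ → ℝ := fun m => ((φ m).2 : ℝ) with hb
  have hmem : ∀ m, a m < x ∧ x < b m := fun m =>
    ⟨(nestedOracle_mem hφ m).1, (nestedOracle_mem hφ m).2⟩
  have hlt : ∀ m, a m < b m := fun m => (hmem m).1.trans (hmem m).2
  have ha_mono : Monotone a := by
    refine monotone_nat_of_le_succ fun m => ?_
    exact ((Set.Ioo_subset_Ioo_iff (hlt (m + 1))).1 (hφ.1 m)).1
  have hb_anti : Antitone b := by
    refine antitone_nat_of_succ_le fun m => ?_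
    exact ((Set.Ioo_subset_Ioo_iff (hlt (m + 1))).1 (hφ.1 m)).2
  have hbddA : BddAbove (Set.range a) := ⟨x, by rintro _ ⟨m, rfl⟩; exact (hmem m).1.le⟩
  have hbddB : BddBelow (Set.range b) := ⟨x, by rintro _ ⟨m, rfl⟩; exact (hmem m).2.le⟩
  set A := ⨆ m, a m with hA
  set B := ⨅ m, b m with hB
  have hA_le : A ≤ x := ciSup_le fun m => (hmem m).1.le
  have hx_le_B : x ≤ B := le_ciInf fun m => (hmem m).2.le
  have haA : ∀ m, a m ≤ A := fun m => le_ciSup hbddA m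
  have hbB : ∀ m, B ≤ b m := fun m => ciInf_le hbddB m
  have hBA : B ≤ A := by
    by_contra hcon
    push_neg at hcon
    have key : ∀ z, A < z → z < B → z = x := by
      intro z h1 h2
      have hz : z ∈ ⋂ m, Set.Ioo ((φ m).1 : ℝ) ((φ m).2 : ℝ) := by
        refine Set.mem_iInter.2 fun m => ⟨(haA m).trans_lt h1, h2.trans_le (hbB m)⟩
      rw [hφ.2] at hz
      exact hz
    obtain ⟨z₁, hz₁, hz₁'⟩ := exists_between hcon
    obtain ⟨z₂, hz₂, hz₂'⟩ := exists_between hz₁'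
    have e1 : z₁ = x := key z₁ hz₁ (hz₂.trans hz₂')
    have e2 : z₂ = x := key z₂ (hz₁.trans hz₂) hz₂'
    rw [e1, e2] at hz₂
    exact lt_irrefl x hz₂
  have hAx : A = x := le_antisymm hA_le (le_trans hx_le_B hBA)
  have hBx : B = x := le_antisymm (hBA.trans hA_le) hx_le_B
  have hta : Filter.Tendsto a Filter.atTop (nhds x) := by
    rw [← hAx]; exact tendsto_atTop_ciSup ha_mono hbddA
  have htb : Filter.Tendsto b Filter.atTop (nhds x) := by
    rw [← hBx]; exact tendsto_atTop_ciInf hb_anti hbddB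
  have h1 : ∀ᶠ m in Filter.atTop, x - ε < a m :=
    hta.eventually (eventually_gt_nhds (by linarith))
  have h2 : ∀ᶠ m in Filter.atTop, b m < x + ε :=
    htb.eventually (eventually_lt_nhds (by linarith))
  obtain ⟨m, hm1, hm2⟩ := (h1.and h2).exists
  exact ⟨m, Set.Ioo_subset_Ioo hm1.le hm2.le⟩

/-- Every Lacombe-computable function δ : ℝ → ℝ is continuous. -/
theorem lacombe_computable_continuous (δ : ℝ → ℝ)
    (h : ∃ ξ : ℚ × ℚ → ℚ × ℚ, Computable ξ ∧
      ∀ (φ : ℕ → ℚ × ℚ) (x : ℝ), NestedOracle φ x →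
        NestedOracle (fun m => ξ (φ m)) (δ x)) :
    Continuous δ := by
  obtain ⟨ξ, -, hξ⟩ := h
  refine continuous_iff_continuousAt.mpr fun x => Metric.tendsto_nhds.mpr fun ε hε => ?_
  obtain ⟨p, hp⟩ := exists_rat_lt x
  obtain ⟨q, hq⟩ := exists_rat_gt x
  obtain ⟨φ, hφ, -⟩ := oracle_extend x p q hp hq
  have hδφ := hξ φ x hφ
  obtain ⟨m, hm⟩ := oracle_shrink hδφ hε
  have hU : Set.Ioo ((φ m).1 : ℝ) ((φ m).2 : ℝ) ∈ nhds x :=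
    Ioo_mem_nhds (nestedOracle_mem hφ m).1 (nestedOracle_mem hφ m).2
  filter_upwards [hU] with y hy
  obtain ⟨ψ, hψ, hψm⟩ := oracle_prefix hφ m y hy
  have hδψ := hξ ψ y hψ
  have hmemy : δ y ∈ Set.Ioo ((ξ (ψ m)).1 : ℝ) ((ξ (ψ m)).2 : ℝ) := nestedOracle_mem hδψ m
  rw [hψm] at hmemy
  have hball := hm hmemy
  rw [Real.dist_eq, abs_sub_lt_iff]
  exact ⟨by linarith [hball.2], by linarith [hball.1]⟩
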